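/- Let n ≥ 1, m ≥ 4n−1, and let R be any one of the pinhole reference (R_p(t1,t2) = 1 iff (t1,t2)=(n−1,n−1)), the slit reference (R_s(t1,t2) = 1 iff t2 = n−1), or the block reference (R_b ≡ 1). Then the deconvolution matrix T_R satisfies the norm bounds ‖T_R‖_op ≤ 4/m and ‖T_R*·T_R‖_F ≤ 16·n/m². (In the pinhole case the sharper equalities ‖T_{R_p}‖_op = 1/m and ‖T_{R_p}*·T_{R_p}‖_F ≤ n/m² hold.) -/

import Mathlib

open Complex MeasureTheory ProbabilityTheory Matrix ComplexConjugate
open scoped Kronecker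

noncomputable section

/-- Zero-extension of a matrix to integer indices: out-of-range entries are `0`. -/
def zext {n1 n2 : ℕ} (X : Matrix (Fin n1) (Fin n2) ℂ) (t1 t2 : ℤ) : ℂ :=
  if h : 0 ≤ t1 ∧ t1 < (n1 : ℤ) ∧ 0 ≤ t2 ∧ t2 < (n2 : ℤ) then
    X ⟨t1.toNat, by omega⟩ ⟨t2.toNat, by omega⟩
  else 0

/-- Cross-correlation `C_{[X1,X2]}(s1,s2)`, with out-of-range terms taken as `0`. -/
def crossCorr {n1 n2 : ℕ} (X1 X2 : Matrix (Fin n1) (Fin n2) ℂ) (s1 s2 : ℤ) : ℂ :=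
  ∑ t1 : Fin n1, ∑ t2 : Fin n2,
    X1 t1 t2 * conj (zext X2 (((t1 : ℕ) : ℤ) - s1) (((t2 : ℕ) : ℤ) - s2))

/-- Autocorrelation `A_X = C_{[X,X]}`. -/
def autocorr {n1 n2 : ℕ} (X : Matrix (Fin n1) (Fin n2) ℂ) : ℤ → ℤ → ℂ :=
  crossCorr X X

/-- Horizontal concatenation `[X, R]` of two `n × n` matrices. -/
def hcat {n : ℕ} (X R : Matrix (Fin n) (Fin n) ℂ) : Matrix (Fin n) (Fin (2 * n)) ℂ :=
  Matrix.of fun t1 t2 =>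
    if h : (t2 : ℕ) < n then X t1 ⟨t2, h⟩ else R t1 ⟨(t2 : ℕ) - n, by omega⟩

/-- The size `m1 × m2` oversampled discrete Fourier transform of an `n1 × n2` signal. -/
def dft2 {n1 n2 : ℕ} (m1 m2 : ℕ) (Z : Matrix (Fin n1) (Fin n2) ℂ) (k1 k2 : ℕ) : ℂ :=
  ∑ t1 : Fin n1, ∑ t2 : Fin n2,
    Z t1 t2 * Complex.exp (-(2 * (Real.pi : ℂ) * Complex.I) *
      (((t1 : ℕ) : ℂ) * (k1 : ℂ) / (m1 : ℂ) + ((t2 : ℕ) : ℂ) * (k2 : ℂ) / (m2 : ℂ)))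

/-- Quadrant cross-correlation `C°_{[X,R]}(i,j) = C_{[X,R]}(i-(n-1), j-(n-1))`. -/
def quadCC {n : ℕ} (X R : Matrix (Fin n) (Fin n) ℂ) : Matrix (Fin n) (Fin n) ℂ :=
  Matrix.of fun i j =>
    crossCorr X R (((i : ℕ) : ℤ) - ((n : ℤ) - 1)) (((j : ℕ) : ℤ) - ((n : ℤ) - 1))

/-- Columnwise vectorization: the pair `(j, i)` (column `j`, row `i`) indexes entry `X i j`. -/
def vecM {a b : ℕ} (X : Matrix (Fin a) (Fin b) ℂ) : Fin b × Fin a → ℂ :=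
  fun p => X p.2 p.1

/-- The matrix `M_R` satisfying `vec (C°_{[X,R]}) = M_R • vec X` (columnwise vectorization). -/
def MR {n : ℕ} (R : Matrix (Fin n) (Fin n) ℂ) :
    Matrix (Fin n × Fin n) (Fin n × Fin n) ℂ :=
  Matrix.of fun p q =>
    conj (zext R (((q.2 : ℕ) : ℤ) - ((p.2 : ℕ) : ℤ) + ((n : ℤ) - 1))
      (((q.1 : ℕ) : ℤ) - ((p.1 : ℕ) : ℤ) + ((n : ℤ) - 1)))

/-- `P1 · F_LA^*`: row `t ∈ {0,…,n-1}` corresponds to the column `t - (n-1)` of `F_LA`. -/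
def P1FLA (n m : ℕ) : Matrix (Fin n) (Fin m) ℂ :=
  Matrix.of fun t k =>
    Complex.exp ((2 * (Real.pi : ℂ) * Complex.I) * ((k : ℕ) : ℂ) *
      (((t : ℕ) : ℂ) - ((n : ℂ) - 1)) / (m : ℂ))

/-- `P2 · F_RA^*`: row `t ∈ {0,…,n-1}` corresponds to the column `t - (2n-1)` of `F_RA`. -/
def P2FRA (n m : ℕ) : Matrix (Fin n) (Fin m) ℂ :=
  Matrix.of fun t k =>
    Complex.exp ((2 * (Real.pi : ℂ) * Complex.I) * ((k : ℕ) : ℂ) *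
      (((t : ℕ) : ℂ) - (2 * (n : ℂ) - 1)) / (m : ℂ))

/-- The referenced-deconvolution matrix
`T_R = (1/m²) · M_R⁻¹ · [(P2 F_RA^*) ⊗ (P1 F_LA^*)]`. -/
def TR {n : ℕ} (m : ℕ) (R : Matrix (Fin n) (Fin n) ℂ) :
    Matrix (Fin n × Fin n) (Fin m × Fin m) ℂ :=
  ((m : ℂ) ^ 2)⁻¹ • ((MR R)⁻¹ * (P2FRA n m ⊗ₖ P1FLA n m))

/-- The reference scaling factor: `S_R(k1,k2)` is the squared ℓ²-norm of the column of `T_R`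
indexed by the pair `(k1, k2)` (i.e. column `m·k1 + k2`). -/
def SR {n : ℕ} (m : ℕ) (R : Matrix (Fin n) (Fin n) ℂ) (k1 k2 : Fin m) : ℝ :=
  ∑ p : Fin n × Fin n, ‖TR m R p (k1, k2)‖ ^ 2

/-- Lower-triangular all-ones matrix `1_L`. -/
def oneL (n : ℕ) : Matrix (Fin n) (Fin n) ℂ :=
  Matrix.of fun i j => if j ≤ i then 1 else 0

/-- First-order difference matrix `D_n` (the inverse of `1_L`). -/
def Dmat (n : ℕ) : Matrix (Fin n) (Fin n) ℂ :=
  Matrix.of fun i j => if i = j then 1 else if (j : ℕ) + 1 = (i : ℕ) then -1 else 0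

/-- Pinhole reference. -/
def pinholeRef (n : ℕ) : Matrix (Fin n) (Fin n) ℂ :=
  Matrix.of fun t1 t2 => if (t1 : ℕ) = n - 1 ∧ (t2 : ℕ) = n - 1 then 1 else 0

/-- Slit reference. -/
def slitRef (n : ℕ) : Matrix (Fin n) (Fin n) ℂ :=
  Matrix.of fun _ t2 => if (t2 : ℕ) = n - 1 then 1 else 0

/-- Block reference. -/
def blockRef (n : ℕ) : Matrix (Fin n) (Fin n) ℂ :=
  Matrix.of fun _ _ => 1

/-- The ℓ² operator (spectral) norm of a complex matrix. -/
def opNorm {α β : Type*} [Fintype α] [Fintype β] [DecidableEq β] (A : Matrix α β ℂ) : ℝ :=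
  ‖LinearMap.toContinuousLinearMap (Matrix.toEuclideanLin A)‖

/-- The Frobenius norm of a complex matrix. -/
def frobNorm {α β : Type*} [Fintype α] [Fintype β] (A : Matrix α β ℂ) : ℝ :=
  Real.sqrt (∑ i, ∑ j, ‖A i j‖ ^ 2)


section Helpers

variable {M : Type*} [AddCommMonoid M]

lemma sum_ite_coe_eq {n : ℕ} (c : ℕ) (v : M) :
    (∑ k : Fin n, if (k : ℕ) = c then v else 0) = if c < n then v else 0 := by
  by_cases hc : c < n
  · rw [if_pos hc, Finset.sum_eq_single (⟨c, hc⟩ : Fin n)]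
    · simp
    · intro k _ hk
      rw [if_neg]
      intro h; exact hk (Fin.ext h)
    · intro h; exact absurd (Finset.mem_univ _) h
  · rw [if_neg hc, Finset.sum_eq_zero]
    intro k _
    rw [if_neg]
    intro h; exact hc (h ▸ k.isLt)

lemma sum_ite_succ_eq {n : ℕ} (c : ℕ) (v : M) :
    (∑ k : Fin n, if (k : ℕ) + 1 = c then v else 0) = if 1 ≤ c ∧ c ≤ n then v else 0 := by
  by_cases hc : 1 ≤ c ∧ c ≤ n
  · rw [if_pos hc, Finset.sum_eq_single (⟨c - 1, by omega⟩ : Fin n)]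
    · simp; omega
    · intro k _ hk
      rw [if_neg]
      intro h; exact hk (Fin.ext (by simp; omega))
    · intro h; exact absurd (Finset.mem_univ _) h
  · rw [if_neg hc, Finset.sum_eq_zero]
    intro k _
    rw [if_neg]
    have := k.isLt
    omega

end Helpers

/-- Subdiagonal shift matrix. -/
def Nmat (n : ℕ) : Matrix (Fin n) (Fin n) ℂ :=
  Matrix.of fun i j => if (j : ℕ) + 1 = (i : ℕ) then 1 else 0

/-- Diagonal projection. -/
def Emat (n : ℕ) : Matrix (Fin n) (Fin n) ℂ :=
  Matrix.of fun i j => if i = j ∧ (i : ℕ) + 1 < n then 1 else 0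

lemma Dmat_eq (n : ℕ) : Dmat n = 1 - Nmat n := by
  ext i j
  simp only [Dmat, Nmat, Matrix.sub_apply, Matrix.one_apply, Matrix.of_apply, Fin.ext_iff]
  split_ifs <;> first | (exfalso; omega) | norm_num

lemma NhN (n : ℕ) : (Nmat n)ᴴ * Nmat n = Emat n := by
  ext i j
  rw [Matrix.mul_apply]
  have : ∀ k : Fin n, (Nmat n)ᴴ i k * Nmat n k j =
      if (k : ℕ) = (i : ℕ) + 1 then (if i = j then (1:ℂ) else 0) else 0 := by
    intro k
    simp only [Nmat, Matrix.conjTranspose_apply, Matrix.of_apply, Fin.ext_iff]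
    split_ifs <;> first | (exfalso; omega) | norm_num
  rw [Finset.sum_congr rfl fun k _ => this k, sum_ite_coe_eq]
  simp only [Emat, Matrix.of_apply, Fin.ext_iff]
  split_ifs <;> first | rfl | omega

lemma EE (n : ℕ) : Emat n * Emat n = Emat n := by
  ext i j
  rw [Matrix.mul_apply]
  have : ∀ k : Fin n, Emat n i k * Emat n k j =
      if (k : ℕ) = (i : ℕ) then (if i = j ∧ (i:ℕ) + 1 < n then (1:ℂ) else 0) else 0 := by
    intro k
    simp only [Emat, Matrix.of_apply, Fin.ext_iff]
    split_ifs <;> first | (exfalso; omega) | norm_num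
  rw [Finset.sum_congr rfl fun k _ => this k, sum_ite_coe_eq]
  simp only [Emat, Matrix.of_apply]
  rw [if_pos i.isLt]

lemma Eherm (n : ℕ) : (Emat n)ᴴ = Emat n := by
  ext i j
  simp only [Emat, Matrix.conjTranspose_apply, Matrix.of_apply, Fin.ext_iff]
  split_ifs <;> first | (exfalso; omega) | norm_num

lemma oneL_mul_Dmat (n : ℕ) : oneL n * Dmat n = 1 := by
  ext i j
  rw [Matrix.mul_apply]
  have : ∀ k : Fin n, oneL n i k * Dmat n k j =
      (if (k : ℕ) = (j : ℕ) then (if (j:ℕ) ≤ (i:ℕ) then (1:ℂ) else 0) else 0)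
      + (if (k : ℕ) = (j : ℕ) + 1 then (if (j:ℕ)+1 ≤ (i:ℕ) then (-1:ℂ) else 0) else 0) := by
    intro k
    simp only [oneL, Dmat, Matrix.of_apply, Fin.ext_iff, Fin.le_def]
    split_ifs <;> first | (exfalso; omega) | norm_num
  rw [Finset.sum_congr rfl fun k _ => this k, Finset.sum_add_distrib,
    sum_ite_coe_eq, sum_ite_coe_eq, Matrix.one_apply]
  have hj := j.isLt
  have hi := i.isLt
  simp only [Fin.ext_iff]
  split_ifs <;> first | (exfalso; omega) | norm_num

lemma MR_pinhole (n : ℕ) (hn : 1 ≤ n) : MR (pinholeRef n) = 1 := by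
  ext p q
  have h1 := p.1.isLt; have h2 := p.2.isLt; have h3 := q.1.isLt; have h4 := q.2.isLt
  simp only [MR, pinholeRef, zext, Matrix.of_apply, Matrix.one_apply, Prod.ext_iff, Fin.ext_iff]
  split_ifs <;> first | (exfalso; omega) | simp | (simp; omega)

lemma MR_slit (n : ℕ) (hn : 1 ≤ n) :
    MR (slitRef n) = (1 : Matrix (Fin n) (Fin n) ℂ) ⊗ₖ oneL n := by
  ext p q
  have h1 := p.1.isLt; have h2 := p.2.isLt; have h3 := q.1.isLt; have h4 := q.2.isLt
  simp only [MR, slitRef, zext, oneL, Matrix.kroneckerMap_apply, Matrix.of_apply,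
    Matrix.one_apply, Fin.ext_iff, Fin.le_def]
  split_ifs <;> first | (exfalso; omega) | simp | (simp; omega)

lemma MR_block (n : ℕ) (hn : 1 ≤ n) : MR (blockRef n) = oneL n ⊗ₖ oneL n := by
  ext p q
  have h1 := p.1.isLt; have h2 := p.2.isLt; have h3 := q.1.isLt; have h4 := q.2.isLt
  simp only [MR, blockRef, zext, oneL, Matrix.kroneckerMap_apply, Matrix.of_apply,
    Fin.ext_iff, Fin.le_def]
  split_ifs <;> first | (exfalso; omega) | simp | (simp; omega)

lemma MRinv_pinhole (n : ℕ) (hn : 1 ≤ n) : (MR (pinholeRef n))⁻¹ = 1 := by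
  rw [MR_pinhole n hn, inv_one]

lemma MRinv_slit (n : ℕ) (hn : 1 ≤ n) :
    (MR (slitRef n))⁻¹ = (1 : Matrix (Fin n) (Fin n) ℂ) ⊗ₖ Dmat n := by
  rw [MR_slit n hn]
  apply Matrix.inv_eq_right_inv
  rw [← Matrix.mul_kronecker_mul, oneL_mul_Dmat, mul_one, Matrix.one_kronecker_one]

lemma MRinv_block (n : ℕ) (hn : 1 ≤ n) : (MR (blockRef n))⁻¹ = Dmat n ⊗ₖ Dmat n := by
  rw [MR_block n hn]
  apply Matrix.inv_eq_right_inv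
  rw [← Matrix.mul_kronecker_mul, oneL_mul_Dmat, Matrix.one_kronecker_one]

section Fourier

lemma rowexp_mul_conjT (n m : ℕ) (hnm : n ≤ m) (hm : 1 ≤ m) (c : ℂ) (hc : conj c = c)
    (F : Matrix (Fin n) (Fin m) ℂ)
    (hF : ∀ (t : Fin n) (k : Fin m), F t k =
      Complex.exp ((2 * (Real.pi : ℂ) * Complex.I) * ((k : ℕ) : ℂ) *
        (((t : ℕ) : ℂ) - c) / (m : ℂ))) :
    F * Fᴴ = (m : ℂ) • 1 := by
  have hm0 : ((m : ℕ) : ℂ) ≠ 0 := Nat.cast_ne_zero.mpr (by omega)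
  ext t t'
  rw [Matrix.mul_apply]
  set d : ℤ := ((t : ℕ) : ℤ) - ((t' : ℕ) : ℤ) with hd
  have key : ∀ k : Fin m, F t k * Fᴴ k t' =
      Complex.exp (2 * (Real.pi : ℂ) * Complex.I * ((d : ℤ) : ℂ) / (m : ℂ)) ^ (k : ℕ) := by
    intro k
    rw [Matrix.conjTranspose_apply, hF, hF]
    simp only [RCLike.star_def]
    rw [← Complex.exp_conj, ← Complex.exp_add, ← Complex.exp_nat_mul]
    congr 1
    have hcj : conj ((2 * (Real.pi : ℂ) * Complex.I) * ((k : ℕ) : ℂ) *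
        (((t' : ℕ) : ℂ) - c) / (m : ℂ))
        = -((2 * (Real.pi : ℂ) * Complex.I) * ((k : ℕ) : ℂ) *
        (((t' : ℕ) : ℂ) - c) / (m : ℂ)) := by
      simp only [map_div₀, _root_.map_mul, _root_.map_sub, Complex.conj_I,
        Complex.conj_natCast, Complex.conj_ofReal, map_ofNat, hc]
      ring
    rw [hcj]
    have hdc : ((d : ℤ) : ℂ) = ((t : ℕ) : ℂ) - ((t' : ℕ) : ℂ) := by
      rw [hd]; push_cast; ring
    rw [hdc]
    field_simp
    ring
  rw [Finset.sum_congr rfl fun k _ => key k]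
  by_cases htt : t = t'
  · subst htt
    have hd0 : d = 0 := by omega
    rw [hd0]
    simp [Matrix.smul_apply, Matrix.one_apply]
  · have hd0 : d ≠ 0 := by
      have : (t : ℕ) ≠ (t' : ℕ) := fun h => htt (Fin.ext h)
      omega
    set w : ℂ := 2 * (Real.pi : ℂ) * Complex.I * ((d : ℤ) : ℂ) / (m : ℂ) with hw
    have hzm : Complex.exp w ^ m = 1 := by
      rw [← Complex.exp_nat_mul]
      have : (m : ℂ) * w = ((d : ℤ) : ℂ) * (2 * (Real.pi : ℂ) * Complex.I) := by
        rw [hw]; field_simp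
      rw [this, Complex.exp_int_mul_two_pi_mul_I]
    have hz1 : Complex.exp w ≠ 1 := by
      intro hz
      rw [Complex.exp_eq_one_iff] at hz
      obtain ⟨kk, hk⟩ := hz
      have h2 : (2 * (Real.pi : ℂ) * Complex.I) * (((d : ℤ) : ℂ) / (m : ℂ))
          = (2 * (Real.pi : ℂ) * Complex.I) * (kk : ℂ) := by
        rw [show (2 * (Real.pi : ℂ) * Complex.I) * (((d : ℤ) : ℂ) / (m : ℂ)) = w by
          rw [hw]; ring, hk]
        ring
      have h3 : ((d : ℤ) : ℂ) / (m : ℂ) = (kk : ℂ) :=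
        mul_left_cancel₀ Complex.two_pi_I_ne_zero h2
      have h4 : ((d : ℤ) : ℂ) = ((kk * (m : ℤ) : ℤ) : ℂ) := by
        push_cast
        field_simp at h3 ⊢
        linear_combination h3
      have h5 : d = kk * (m : ℤ) := by exact_mod_cast h4
      have h6 : d.natAbs = kk.natAbs * m := by
        rw [h5, Int.natAbs_mul]; simp
      have h7 : kk.natAbs ≠ 0 := by
        intro h0
        rw [h0, zero_mul] at h6
        omega
      obtain ⟨q, hq⟩ : ∃ q, q = kk.natAbs * m := ⟨_, rfl⟩
      have h8 : m ≤ q := by rw [hq]; exact Nat.le_mul_of_pos_left m (by omega)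
      have h9 : d.natAbs < m := by
        have := t.isLt; have := t'.isLt
        omega
      omega
    rw [Fin.sum_univ_eq_sum_range (fun k => Complex.exp w ^ k) m, geom_sum_eq hz1, hzm]
    simp [Matrix.smul_apply, Matrix.one_apply, htt]

lemma P1FLA_mul_conjT (n m : ℕ) (hnm : n ≤ m) (hm : 1 ≤ m) :
    P1FLA n m * (P1FLA n m)ᴴ = (m : ℂ) • 1 :=
  rowexp_mul_conjT n m hnm hm ((n : ℂ) - 1) (by simp) _ (fun t k => rfl)

lemma P2FRA_mul_conjT (n m : ℕ) (hnm : n ≤ m) (hm : 1 ≤ m) :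
    P2FRA n m * (P2FRA n m)ᴴ = (m : ℂ) • 1 :=
  rowexp_mul_conjT n m hnm hm (2 * (n : ℂ) - 1) (by simp [map_ofNat]) _ (fun t k => rfl)

lemma kron_conjT {a b c d : Type*} [Fintype a] [Fintype b] [Fintype c] [Fintype d]
    (A : Matrix a b ℂ) (B : Matrix c d ℂ) : (A ⊗ₖ B)ᴴ = Aᴴ ⊗ₖ Bᴴ := by
  ext ⟨i1, i2⟩ ⟨j1, j2⟩
  simp [Matrix.conjTranspose_apply, Matrix.kroneckerMap_apply, star_mul']

lemma FFH (n m : ℕ) (hnm : n ≤ m) (hm : 1 ≤ m) :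
    (P2FRA n m ⊗ₖ P1FLA n m) * (P2FRA n m ⊗ₖ P1FLA n m)ᴴ
      = (((m : ℂ)) ^ 2) • 1 := by
  rw [kron_conjT, ← Matrix.mul_kronecker_mul, P2FRA_mul_conjT n m hnm hm,
    P1FLA_mul_conjT n m hnm hm, Matrix.smul_kronecker, Matrix.kronecker_smul,
    Matrix.one_kronecker_one, smul_smul]
  rw [sq]

end Fourier

section Frob

/-- Squared Frobenius norm. -/
def frobSq {α β : Type*} [Fintype α] [Fintype β] (A : Matrix α β ℂ) : ℝ :=
  ∑ i, ∑ j, ‖A i j‖ ^ 2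

lemma frobNorm_eq {α β : Type*} [Fintype α] [Fintype β] (A : Matrix α β ℂ) :
    frobNorm A = Real.sqrt (frobSq A) := rfl

lemma frobSq_nonneg {α β : Type*} [Fintype α] [Fintype β] (A : Matrix α β ℂ) :
    0 ≤ frobSq A :=
  Finset.sum_nonneg fun _ _ => Finset.sum_nonneg fun _ _ => sq_nonneg _

lemma trace_mul_conjT {α β : Type*} [Fintype α] [Fintype β] (A : Matrix α β ℂ) :
    Matrix.trace (A * Aᴴ) = ((frobSq A : ℝ) : ℂ) := by
  simp only [Matrix.trace, Matrix.diag, Matrix.mul_apply, Matrix.conjTranspose_apply, frobSq]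
  push_cast
  refine Finset.sum_congr rfl fun i _ => Finset.sum_congr rfl fun j _ => ?_
  rw [mul_comm]
  simp [RCLike.star_def, Complex.conj_mul', Complex.normSq_eq_norm_sq]

lemma frobSq_conjT_mul {α β : Type*} [Fintype α] [Fintype β] (T : Matrix α β ℂ) :
    frobSq (Tᴴ * T) = frobSq (T * Tᴴ) := by
  have h1 := trace_mul_conjT (Tᴴ * T)
  have h2 := trace_mul_conjT (T * Tᴴ)
  rw [Matrix.conjTranspose_mul, Matrix.conjTranspose_conjTranspose] at h1 h2
  have h3 : Matrix.trace (Tᴴ * T * (Tᴴ * T)) = Matrix.trace (T * Tᴴ * (T * Tᴴ)) := by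
    rw [show Tᴴ * T * (Tᴴ * T) = Tᴴ * (T * (Tᴴ * T)) by simp only [Matrix.mul_assoc],
      Matrix.trace_mul_comm]
    simp only [Matrix.mul_assoc]
  rw [h1, h2] at h3
  exact_mod_cast h3

lemma frobSq_smul {α β : Type*} [Fintype α] [Fintype β] (c : ℂ) (A : Matrix α β ℂ) :
    frobSq (c • A) = ‖c‖ ^ 2 * frobSq A := by
  simp only [frobSq, Matrix.smul_apply, smul_eq_mul, norm_mul, mul_pow, Finset.mul_sum]

lemma frobSq_kron {α β γ δ : Type*} [Fintype α] [Fintype β] [Fintype γ] [Fintype δ]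
    (A : Matrix α β ℂ) (B : Matrix γ δ ℂ) :
    frobSq (A ⊗ₖ B) = frobSq A * frobSq B := by
  simp only [frobSq, Matrix.kroneckerMap_apply, norm_mul, mul_pow, Fintype.sum_prod_type]
  calc (∑ p1, ∑ p2, ∑ q1, ∑ q2, ‖A p1 q1‖ ^ 2 * ‖B p2 q2‖ ^ 2)
      = ∑ p1, ∑ q1, ∑ p2, ∑ q2, ‖A p1 q1‖ ^ 2 * ‖B p2 q2‖ ^ 2 :=
        Finset.sum_congr rfl fun p1 _ => Finset.sum_comm
    _ = (∑ p1, ∑ q1, ‖A p1 q1‖ ^ 2) * (∑ p2, ∑ q2, ‖B p2 q2‖ ^ 2) := by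
        rw [Finset.sum_mul]
        refine Finset.sum_congr rfl fun p1 _ => ?_
        rw [Finset.sum_mul]
        refine Finset.sum_congr rfl fun q1 _ => ?_
        rw [Finset.mul_sum]
        exact Finset.sum_congr rfl fun p2 _ => by rw [Finset.mul_sum]

lemma frobSq_one {α : Type*} [Fintype α] [DecidableEq α] :
    frobSq (1 : Matrix α α ℂ) = Fintype.card α := by
  simp only [frobSq, Matrix.one_apply]
  have : ∀ i : α, ∑ j : α, ‖if i = j then (1:ℂ) else 0‖ ^ 2 = 1 := by
    intro i
    rw [Finset.sum_eq_single i]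
    · simp
    · intro b _ hb; simp [Ne.symm hb]
    · intro h; exact absurd (Finset.mem_univ _) h
  rw [Finset.sum_congr rfl fun i _ => this i]
  simp

end Frob

section DDH

lemma DDH_apply (n : ℕ) (i j : Fin n) :
    (Dmat n * (Dmat n)ᴴ) i j =
      (if (j : ℕ) = (i : ℕ) then (if 1 ≤ (i : ℕ) then (2:ℂ) else 1) else 0)
      - (if (j : ℕ) = (i : ℕ) + 1 then 1 else 0)
      - (if (j : ℕ) + 1 = (i : ℕ) then 1 else 0) := by
  rw [Matrix.mul_apply]
  have key : ∀ k : Fin n, Dmat n i k * (Dmat n)ᴴ k j =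
      (if (k : ℕ) = (i : ℕ) then (if (i:ℕ) = (j:ℕ) then (1:ℂ) else 0) else 0)
      + (if (k : ℕ) + 1 = (i : ℕ) then (if (i:ℕ) = (j:ℕ) then (1:ℂ) else 0) else 0)
      - (if (k : ℕ) = (i : ℕ) then (if (i:ℕ) + 1 = (j:ℕ) then (1:ℂ) else 0) else 0)
      - (if (k : ℕ) + 1 = (i : ℕ) then (if (j:ℕ) + 1 = (i:ℕ) then (1:ℂ) else 0) else 0) := by
    intro k
    simp only [Dmat, Matrix.conjTranspose_apply, Matrix.of_apply, Fin.ext_iff]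
    simp only [RCLike.star_def]
    split_ifs <;> first | (exfalso; omega) | simp | norm_num
  rw [Finset.sum_congr rfl fun k _ => key k]
  simp only [Finset.sum_sub_distrib, Finset.sum_add_distrib, sum_ite_coe_eq, sum_ite_succ_eq]
  have hi := i.isLt
  have hj := j.isLt
  split_ifs <;> first | (exfalso; omega) | norm_num

lemma DDH_normSq_le (n : ℕ) (i j : Fin n) :
    ‖(Dmat n * (Dmat n)ᴴ) i j‖ ^ 2 ≤
      4 * (((if (j : ℕ) = (i : ℕ) then 1 else 0)
      + (if (j : ℕ) = (i : ℕ) + 1 then 1 else 0)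
      + (if (j : ℕ) + 1 = (i : ℕ) then 1 else 0)) : ℝ) := by
  rw [DDH_apply]
  split_ifs <;> first | (exfalso; omega) | (norm_num)

lemma frobSq_DDH_le (n : ℕ) : frobSq (Dmat n * (Dmat n)ᴴ) ≤ 12 * n := by
  have h1 : frobSq (Dmat n * (Dmat n)ᴴ) ≤ ∑ i : Fin n, (12 : ℝ) := by
    refine Finset.sum_le_sum fun i _ => ?_
    calc (∑ j, ‖(Dmat n * (Dmat n)ᴴ) i j‖ ^ 2)
        ≤ ∑ j : Fin n, 4 * (((if (j : ℕ) = (i : ℕ) then 1 else 0)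
          + (if (j : ℕ) = (i : ℕ) + 1 then 1 else 0)
          + (if (j : ℕ) + 1 = (i : ℕ) then 1 else 0)) : ℝ) :=
          Finset.sum_le_sum fun j _ => DDH_normSq_le n i j
      _ ≤ 12 := by
          simp only [mul_add, mul_ite, mul_one, mul_zero, Finset.sum_add_distrib,
            sum_ite_coe_eq, sum_ite_succ_eq]
          have := i.isLt
          split_ifs <;> norm_num
  calc frobSq (Dmat n * (Dmat n)ᴴ) ≤ ∑ _i : Fin n, (12 : ℝ) := h1
    _ = 12 * n := by simp [mul_comm]

end DDH

section OpN
open scoped Matrix.Norms.L2Operator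

lemma opNorm_eq_l2 {α β : Type*} [Fintype α] [Fintype β] [DecidableEq β] (A : Matrix α β ℂ) :
    opNorm A = ‖A‖ := rfl

lemma l2_norm_one {ι : Type*} [Fintype ι] [DecidableEq ι] [Nonempty ι] :
    ‖(1 : Matrix ι ι ℂ)‖ = 1 := by
  have h := Matrix.l2_opNorm_conjTranspose_mul_self (1 : Matrix ι ι ℂ)
  rw [Matrix.conjTranspose_one, mul_one] at h
  have h0 : ‖(1 : Matrix ι ι ℂ)‖ ≠ 0 := by
    rw [norm_ne_zero_iff]
    intro h1
    obtain ⟨i⟩ := (inferInstance : Nonempty ι)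
    have h2 : (1 : Matrix ι ι ℂ) i i = 0 := by rw [h1]; rfl
    rw [Matrix.one_apply_eq] at h2
    exact one_ne_zero h2
  have h3 : ‖(1 : Matrix ι ι ℂ)‖ * 1 = ‖(1 : Matrix ι ι ℂ)‖ * ‖(1 : Matrix ι ι ℂ)‖ := by
    rw [mul_one]; exact h
  exact (mul_left_cancel₀ h0 h3).symm

lemma l2_norm_of_mul_conjT {α β : Type*} [Fintype α] [Fintype β] [DecidableEq α] [DecidableEq β] [Nonempty α]
    (A : Matrix α β ℂ) (c : ℝ) (hc : 0 ≤ c)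
    (h : A * Aᴴ = ((c : ℝ) : ℂ) • 1) : ‖A‖ = Real.sqrt c := by
  have h1 : ‖A‖ * ‖A‖ = c := by
    rw [← Matrix.l2_opNorm_conjTranspose A, ← Matrix.l2_opNorm_conjTranspose_mul_self Aᴴ,
      Matrix.conjTranspose_conjTranspose, h, norm_smul, l2_norm_one, mul_one,
      Complex.norm_real, Real.norm_eq_abs, _root_.abs_of_nonneg hc]
  rw [← h1, Real.sqrt_mul_self (norm_nonneg A)]

lemma norm_idem_le {ι : Type*} [Fintype ι] [DecidableEq ι]
    (E : Matrix ι ι ℂ) (h : E * E = E) (hh : Eᴴ = E) : ‖E‖ ≤ 1 := by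
  have h1 : ‖E‖ * ‖E‖ = ‖E‖ := by
    rw [← Matrix.l2_opNorm_conjTranspose_mul_self E, hh, h]
  nlinarith [norm_nonneg E]

lemma norm_le_one_of_gram_idem {ι : Type*} [Fintype ι] [DecidableEq ι]
    (N : Matrix ι ι ℂ) (h : (Nᴴ * N) * (Nᴴ * N) = Nᴴ * N) : ‖N‖ ≤ 1 := by
  have h2 : ‖Nᴴ * N‖ ≤ 1 :=
    norm_idem_le _ h (by rw [Matrix.conjTranspose_mul, Matrix.conjTranspose_conjTranspose])
  have h3 := Matrix.l2_opNorm_conjTranspose_mul_self N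
  nlinarith [norm_nonneg N]

lemma kron_sub_right {n : ℕ} (A B C : Matrix (Fin n) (Fin n) ℂ) :
    A ⊗ₖ (B - C) = A ⊗ₖ B - A ⊗ₖ C := by
  ext ⟨i1, i2⟩ ⟨j1, j2⟩
  simp [Matrix.kroneckerMap_apply, mul_sub]

lemma kron_sub_left {n : ℕ} (A B C : Matrix (Fin n) (Fin n) ℂ) :
    (A - B) ⊗ₖ C = A ⊗ₖ C - B ⊗ₖ C := by
  ext ⟨i1, i2⟩ ⟨j1, j2⟩
  simp [Matrix.kroneckerMap_apply, sub_mul]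

lemma norm_one_kron_Nmat_le (n : ℕ) :
    ‖(1 : Matrix (Fin n) (Fin n) ℂ) ⊗ₖ Nmat n‖ ≤ 1 := by
  apply norm_le_one_of_gram_idem
  rw [kron_conjT, Matrix.conjTranspose_one, ← Matrix.mul_kronecker_mul, one_mul, NhN,
    ← Matrix.mul_kronecker_mul, one_mul, EE]

lemma norm_Nmat_kron_one_le (n : ℕ) :
    ‖Nmat n ⊗ₖ (1 : Matrix (Fin n) (Fin n) ℂ)‖ ≤ 1 := by
  apply norm_le_one_of_gram_idem
  rw [kron_conjT, Matrix.conjTranspose_one, ← Matrix.mul_kronecker_mul, one_mul, NhN,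
    ← Matrix.mul_kronecker_mul, one_mul, EE]

lemma norm_one_kron_Dmat_le (n : ℕ) (hn : 1 ≤ n) :
    ‖(1 : Matrix (Fin n) (Fin n) ℂ) ⊗ₖ Dmat n‖ ≤ 2 := by
  have : Nonempty (Fin n) := ⟨⟨0, hn⟩⟩
  rw [Dmat_eq, kron_sub_right, Matrix.one_kronecker_one]
  calc ‖1 - (1 : Matrix (Fin n) (Fin n) ℂ) ⊗ₖ Nmat n‖
      ≤ ‖(1 : Matrix (Fin n × Fin n) (Fin n × Fin n) ℂ)‖ +
        ‖(1 : Matrix (Fin n) (Fin n) ℂ) ⊗ₖ Nmat n‖ := norm_sub_le _ _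
    _ ≤ 1 + 1 := by
        gcongr
        · exact le_of_eq l2_norm_one
        · exact norm_one_kron_Nmat_le n
    _ = 2 := by norm_num

lemma norm_Dmat_kron_one_le (n : ℕ) (hn : 1 ≤ n) :
    ‖Dmat n ⊗ₖ (1 : Matrix (Fin n) (Fin n) ℂ)‖ ≤ 2 := by
  have : Nonempty (Fin n) := ⟨⟨0, hn⟩⟩
  rw [Dmat_eq, kron_sub_left, Matrix.one_kronecker_one]
  calc ‖1 - Nmat n ⊗ₖ (1 : Matrix (Fin n) (Fin n) ℂ)‖
      ≤ ‖(1 : Matrix (Fin n × Fin n) (Fin n × Fin n) ℂ)‖ +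
        ‖Nmat n ⊗ₖ (1 : Matrix (Fin n) (Fin n) ℂ)‖ := norm_sub_le _ _
    _ ≤ 1 + 1 := by
        gcongr
        · exact le_of_eq l2_norm_one
        · exact norm_Nmat_kron_one_le n
    _ = 2 := by norm_num

lemma norm_Dmat_kron_Dmat_le (n : ℕ) (hn : 1 ≤ n) :
    ‖Dmat n ⊗ₖ Dmat n‖ ≤ 4 := by
  have hsplit : Dmat n ⊗ₖ Dmat n =
      (Dmat n ⊗ₖ (1 : Matrix (Fin n) (Fin n) ℂ)) *
      ((1 : Matrix (Fin n) (Fin n) ℂ) ⊗ₖ Dmat n) := by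
    rw [← Matrix.mul_kronecker_mul, mul_one, one_mul]
  rw [hsplit]
  calc ‖(Dmat n ⊗ₖ (1 : Matrix (Fin n) (Fin n) ℂ)) *
        ((1 : Matrix (Fin n) (Fin n) ℂ) ⊗ₖ Dmat n)‖
      ≤ ‖Dmat n ⊗ₖ (1 : Matrix (Fin n) (Fin n) ℂ)‖ *
      ‖(1 : Matrix (Fin n) (Fin n) ℂ) ⊗ₖ Dmat n‖ := Matrix.l2_opNorm_mul _ _
    _ ≤ 2 * 2 := by
        have := norm_Dmat_kron_one_le n hn
        have := norm_one_kron_Dmat_le n hn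
        have h1 : (0:ℝ) ≤ ‖Dmat n ⊗ₖ (1 : Matrix (Fin n) (Fin n) ℂ)‖ := norm_nonneg _
        nlinarith [norm_nonneg ((1 : Matrix (Fin n) (Fin n) ℂ) ⊗ₖ Dmat n)]
    _ = 4 := by norm_num

end OpN

section Master
open scoped Matrix.Norms.L2Operator

lemma TR_aux (n m : ℕ) (hn : 1 ≤ n) (hnm : n ≤ m) (hm : 1 ≤ m)
    (R : Matrix (Fin n) (Fin n) ℂ) (C : Matrix (Fin n × Fin n) (Fin n × Fin n) ℂ)
    (hinv : (MR R)⁻¹ = C) (b : ℝ) (hb : ‖C‖ ≤ b)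
    (s : ℝ) (hs0 : 0 ≤ s) (hs : frobSq (C * Cᴴ) ≤ s) :
    opNorm (TR m R) ≤ b / m ∧
      frobNorm ((TR m R)ᴴ * TR m R) ≤ Real.sqrt s / (m : ℝ) ^ 2 := by
  have hne : Nonempty (Fin n) := ⟨⟨0, hn⟩⟩
  have hmR : (0:ℝ) < m := by exact_mod_cast hm
  have hmC : ((m : ℕ) : ℂ) ≠ 0 := Nat.cast_ne_zero.mpr (by omega)
  set F := P2FRA n m ⊗ₖ P1FLA n m with hFdef
  have hFF : F * Fᴴ = (((m : ℝ) ^ 2 : ℝ) : ℂ) • 1 := by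
    rw [hFdef, FFH n m hnm hm]; norm_cast
  have hTR : TR m R = ((m : ℂ) ^ 2)⁻¹ • (C * F) := by rw [TR, hinv]
  have hnormF : ‖F‖ = m := by
    rw [l2_norm_of_mul_conjT F ((m : ℝ) ^ 2) (by positivity) hFF,
      Real.sqrt_sq hmR.le]
  have hcn : ‖((m : ℂ) ^ 2)⁻¹‖ = ((m : ℝ) ^ 2)⁻¹ := by
    rw [norm_inv, norm_pow, Complex.norm_natCast]
  have hbnn : (0:ℝ) ≤ b := le_trans (norm_nonneg C) hb
  constructor
  · rw [opNorm_eq_l2, hTR, norm_smul, hcn]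
    have h1 : ‖C * F‖ ≤ b * m := by
      calc ‖C * F‖ ≤ ‖C‖ * ‖F‖ := Matrix.l2_opNorm_mul _ _
        _ ≤ b * m := by rw [hnormF]; exact mul_le_mul_of_nonneg_right hb hmR.le
    calc ((m:ℝ)^2)⁻¹ * ‖C * F‖ ≤ ((m:ℝ)^2)⁻¹ * (b * m) := by
          exact mul_le_mul_of_nonneg_left h1 (by positivity)
      _ = b / m := by field_simp
  · have hTT : TR m R * (TR m R)ᴴ = (((1:ℝ)/(m:ℝ)^2 : ℝ) : ℂ) • (C * Cᴴ) := by
      rw [hTR, Matrix.conjTranspose_smul, Matrix.smul_mul, Matrix.mul_smul, smul_smul,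
        Matrix.conjTranspose_mul,
        show C * F * (Fᴴ * Cᴴ) = C * (F * Fᴴ) * Cᴴ by simp only [Matrix.mul_assoc],
        hFF, Matrix.mul_smul, Matrix.smul_mul, smul_smul, Matrix.mul_one]
      congr 1
      have hstar : star (((m : ℂ) ^ 2)⁻¹) = ((m : ℂ) ^ 2)⁻¹ := by
        rw [star_inv₀, star_pow, RCLike.star_def, Complex.conj_natCast]
      rw [hstar]
      push_cast
      field_simp
    rw [frobNorm_eq, frobSq_conjT_mul, hTT, frobSq_smul]
    have hns : ‖(((1:ℝ)/(m:ℝ)^2 : ℝ) : ℂ)‖ ^ 2 = 1 / (m:ℝ)^4 := by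
      rw [Complex.norm_real, Real.norm_eq_abs, _root_.abs_of_nonneg (by positivity)]
      field_simp
    rw [hns]
    calc Real.sqrt (1 / (m:ℝ)^4 * frobSq (C * Cᴴ))
        ≤ Real.sqrt (1 / (m:ℝ)^4 * s) := by
          apply Real.sqrt_le_sqrt
          exact mul_le_mul_of_nonneg_left hs (by positivity)
      _ = Real.sqrt s / (m:ℝ)^2 := by
          rw [show (1:ℝ) / (m:ℝ)^4 * s = s * ((1/(m:ℝ)^2)^2) by ring,
            Real.sqrt_mul hs0, Real.sqrt_sq (by positivity)]
          field_simp

lemma TR_pinhole_opNorm (n m : ℕ) (hn : 1 ≤ n) (hnm : n ≤ m) (hm : 1 ≤ m) :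
    opNorm (TR m (pinholeRef n)) = 1 / (m : ℝ) := by
  have hne : Nonempty (Fin n) := ⟨⟨0, hn⟩⟩
  have hmR : (0:ℝ) < m := by exact_mod_cast hm
  set F := P2FRA n m ⊗ₖ P1FLA n m with hFdef
  have hFF : F * Fᴴ = (((m : ℝ) ^ 2 : ℝ) : ℂ) • 1 := by
    rw [hFdef, FFH n m hnm hm]; norm_cast
  have hTR : TR m (pinholeRef n) = ((m : ℂ) ^ 2)⁻¹ • F := by
    rw [TR, MRinv_pinhole n hn, Matrix.one_mul]
  have hTT : TR m (pinholeRef n) * (TR m (pinholeRef n))ᴴ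
      = (((1:ℝ)/(m:ℝ)^2 : ℝ) : ℂ) • 1 := by
    rw [hTR, Matrix.conjTranspose_smul, Matrix.smul_mul, Matrix.mul_smul, smul_smul, hFF,
      smul_smul]
    congr 1
    have hstar : star (((m : ℂ) ^ 2)⁻¹) = ((m : ℂ) ^ 2)⁻¹ := by
      rw [star_inv₀, star_pow, RCLike.star_def, Complex.conj_natCast]
    rw [hstar]
    push_cast
    have hmC : ((m : ℕ) : ℂ) ≠ 0 := Nat.cast_ne_zero.mpr (by omega)
    field_simp
  rw [opNorm_eq_l2, l2_norm_of_mul_conjT _ _ (by positivity) hTT]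
  rw [show (1:ℝ)/(m:ℝ)^2 = (1/(m:ℝ))^2 by ring, Real.sqrt_sq (by positivity)]

end Master

section Final
open scoped Matrix.Norms.L2Operator

lemma pinhole_clause (n m : ℕ) (hn : 1 ≤ n) (hnm : n ≤ m) (hm1 : 1 ≤ m) :
    opNorm (TR m (pinholeRef n)) = 1 / (m : ℝ) ∧
    frobNorm ((TR m (pinholeRef n))ᴴ * TR m (pinholeRef n)) ≤ (n : ℝ) / (m : ℝ) ^ 2 := by
  have hne : Nonempty (Fin n × Fin n) := ⟨(⟨0, hn⟩, ⟨0, hn⟩)⟩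
  have hC : ‖(1 : Matrix (Fin n × Fin n) (Fin n × Fin n) ℂ)‖ = 1 := l2_norm_one
  have hfs : frobSq ((1 : Matrix (Fin n × Fin n) (Fin n × Fin n) ℂ) *
      (1 : Matrix (Fin n × Fin n) (Fin n × Fin n) ℂ)ᴴ) = (n : ℝ) ^ 2 := by
    rw [Matrix.conjTranspose_one, Matrix.mul_one, frobSq_one]
    simp [Fintype.card_prod]
    push_cast
    ring
  obtain ⟨h1, h2⟩ := TR_aux n m hn hnm hm1 (pinholeRef n) 1 (MRinv_pinhole n hn)
    1 (le_of_eq hC) ((n : ℝ) ^ 2) (by positivity) (le_of_eq hfs)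
  refine ⟨TR_pinhole_opNorm n m hn hnm hm1, ?_⟩
  calc frobNorm ((TR m (pinholeRef n))ᴴ * TR m (pinholeRef n))
      ≤ Real.sqrt ((n : ℝ) ^ 2) / (m : ℝ) ^ 2 := h2
    _ = (n : ℝ) / (m : ℝ) ^ 2 := by rw [Real.sqrt_sq (by positivity)]


/-- For the pinhole, slit, and block references, the deconvolution matrix
satisfies `‖T_R‖_op ≤ 4/m` and `‖T_R*·T_R‖_F ≤ 16n/m²`; in the pinhole case the sharper
`‖T_{R_p}‖_op = 1/m` and `‖T_{R_p}*·T_{R_p}‖_F ≤ n/m²` hold. -/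
theorem TR_norm_bounds
    (n m : ℕ) (hn : 1 ≤ n) (hm : 4 * n - 1 ≤ m)
    (R : Matrix (Fin n) (Fin n) ℂ)
    (hR : R = pinholeRef n ∨ R = slitRef n ∨ R = blockRef n) :
    opNorm (TR m R) ≤ 4 / (m : ℝ) ∧
    frobNorm ((TR m R)ᴴ * TR m R) ≤ 16 * (n : ℝ) / (m : ℝ) ^ 2 ∧
    (R = pinholeRef n →
      opNorm (TR m R) = 1 / (m : ℝ) ∧
      frobNorm ((TR m R)ᴴ * TR m R) ≤ (n : ℝ) / (m : ℝ) ^ 2) := by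
  have hm1 : 1 ≤ m := by omega
  have hnm : n ≤ m := by omega
  have hmR : (0:ℝ) < m := by exact_mod_cast hm1
  have hnR : (0:ℝ) < n := by exact_mod_cast hn
  have hsq256 : Real.sqrt (256 * (n : ℝ) ^ 2) = 16 * n := by
    rw [show (256 * (n : ℝ) ^ 2) = (16 * n) ^ 2 by ring, Real.sqrt_sq (by positivity)]
  rcases hR with h | h | h
  · subst h
    obtain ⟨hop, hfr⟩ := pinhole_clause n m hn hnm hm1
    refine ⟨?_, ?_, fun _ => ⟨hop, hfr⟩⟩
    · rw [hop]; gcongr <;> norm_num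
    · calc frobNorm ((TR m (pinholeRef n))ᴴ * TR m (pinholeRef n))
          ≤ (n : ℝ) / (m : ℝ) ^ 2 := hfr
        _ ≤ 16 * (n : ℝ) / (m : ℝ) ^ 2 := by gcongr; nlinarith
  · subst h
    set C := (1 : Matrix (Fin n) (Fin n) ℂ) ⊗ₖ Dmat n with hCdef
    have hCC : C * Cᴴ = (1 : Matrix (Fin n) (Fin n) ℂ) ⊗ₖ (Dmat n * (Dmat n)ᴴ) := by
      rw [hCdef, kron_conjT, Matrix.conjTranspose_one, ← Matrix.mul_kronecker_mul,
        Matrix.mul_one]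
    have hfsb : frobSq (C * Cᴴ) ≤ 256 * (n : ℝ) ^ 2 := by
      rw [hCC, frobSq_kron, frobSq_one, Fintype.card_fin]
      calc (n : ℝ) * frobSq (Dmat n * (Dmat n)ᴴ) ≤ (n : ℝ) * (12 * n) :=
            mul_le_mul_of_nonneg_left (frobSq_DDH_le n) (by positivity)
        _ ≤ 256 * (n : ℝ) ^ 2 := by nlinarith
    have hb : ‖C‖ ≤ 4 := le_trans (norm_one_kron_Dmat_le n hn) (by norm_num)
    obtain ⟨h1, h2⟩ := TR_aux n m hn hnm hm1 (slitRef n) C (MRinv_slit n hn) 4 hb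
      (256 * (n : ℝ) ^ 2) (by positivity) hfsb
    refine ⟨h1, ?_, fun hEq => ?_⟩
    · calc frobNorm ((TR m (slitRef n))ᴴ * TR m (slitRef n))
          ≤ Real.sqrt (256 * (n : ℝ) ^ 2) / (m : ℝ) ^ 2 := h2
        _ = 16 * (n : ℝ) / (m : ℝ) ^ 2 := by rw [hsq256]
    · rw [hEq]; exact pinhole_clause n m hn hnm hm1
  · subst h
    set C := Dmat n ⊗ₖ Dmat n with hCdef
    have hCC : C * Cᴴ = (Dmat n * (Dmat n)ᴴ) ⊗ₖ (Dmat n * (Dmat n)ᴴ) := by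
      rw [hCdef, kron_conjT, ← Matrix.mul_kronecker_mul]
    have hfsb : frobSq (C * Cᴴ) ≤ 256 * (n : ℝ) ^ 2 := by
      rw [hCC, frobSq_kron]
      have hd := frobSq_DDH_le n
      have hd0 := frobSq_nonneg (Dmat n * (Dmat n)ᴴ)
      nlinarith
    have hb : ‖C‖ ≤ 4 := norm_Dmat_kron_Dmat_le n hn
    obtain ⟨h1, h2⟩ := TR_aux n m hn hnm hm1 (blockRef n) C (MRinv_block n hn) 4 hb
      (256 * (n : ℝ) ^ 2) (by positivity) hfsb
    refine ⟨h1, ?_, fun hEq => ?_⟩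
    · calc frobNorm ((TR m (blockRef n))ᴴ * TR m (blockRef n))
          ≤ Real.sqrt (256 * (n : ℝ) ^ 2) / (m : ℝ) ^ 2 := h2
        _ = 16 * (n : ℝ) / (m : ℝ) ^ 2 := by rw [hsq256]
    · rw [hEq]; exact pinhole_clause n m hn hnm hm1


end Final
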